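/- The function c̄ ↦ k*(c̄) = ( −δε − c̄λ/(r+δ) + √( (δε − c̄λ/(r+δ))² + 4δλhp/(r+δ) ) ) / (2δ) is strictly decreasing on ℝ. -/
import Mathlib


/-- The explicit equilibrium capacity `k*(c̄)` of the competitive model. -/
noncomputable def kstar (r δ lam h p ε cbar : ℝ) : ℝ :=
  (-(δ * ε) - cbar * lam / (r + δ)
      + Real.sqrt ((δ * ε - cbar * lam / (r + δ)) ^ 2 + 4 * δ * lam * h * p / (r + δ)))
    / (2 * δ)

lemma sqrt_add_strictMono (B : ℝ) (hB : 0 < B) :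
    StrictMono (fun t : ℝ => t + Real.sqrt (t ^ 2 + B)) := by
  intro t2 t1 ht
  simp only
  set S1 := Real.sqrt (t1 ^ 2 + B) with hS1def
  set S2 := Real.sqrt (t2 ^ 2 + B) with hS2def
  have hS1 : S1 ^ 2 = t1 ^ 2 + B := Real.sq_sqrt (by positivity)
  have hS2 : S2 ^ 2 = t2 ^ 2 + B := Real.sq_sqrt (by positivity)
  have habs1 : |t1| < S1 := by
    rw [hS1def, ← Real.sqrt_sq_eq_abs]
    exact Real.sqrt_lt_sqrt (sq_nonneg _) (by linarith)
  have habs2 : |t2| < S2 := by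
    rw [hS2def, ← Real.sqrt_sq_eq_abs]
    exact Real.sqrt_lt_sqrt (sq_nonneg _) (by linarith)
  have h1 : -t1 < S1 := lt_of_le_of_lt (neg_le_abs t1) habs1
  have h2 : -t2 < S2 := lt_of_le_of_lt (neg_le_abs t2) habs2
  have hs1 : 0 < S1 := Real.sqrt_pos.mpr (by positivity)
  have hs2 : 0 < S2 := Real.sqrt_pos.mpr (by positivity)
  by_contra hcon
  push_neg at hcon
  have hs : (0:ℝ) < S2 + S1 := by linarith
  have e1 : (t1 - t2) * (S2 + S1) ≤ (S2 - S1) * (S2 + S1) :=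
    mul_le_mul_of_nonneg_right (by linarith) hs.le
  have e2 : (t1 - t2) * (-t1 - t2) < (t1 - t2) * (S2 + S1) :=
    mul_lt_mul_of_pos_left (by linarith) (by linarith)
  nlinarith [e1, e2, hS1, hS2]

/-- The equilibrium capacity `c̄ ↦ k*(c̄)` is strictly decreasing on `ℝ`. -/
theorem kstar_strictAnti
    (r δ lam h p ε : ℝ)
    (hr : 0 < r) (hδ : 0 < δ) (hlam : 0 < lam) (hh : 0 < h) (hp : 0 < p) (hε : 0 < ε) :
    StrictAnti (fun cbar : ℝ => kstar r δ lam h p ε cbar) := by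
  intro c1 c2 hc
  have hrδ : 0 < r + δ := by linarith
  have hB : 0 < 4 * δ * lam * h * p / (r + δ) := by positivity
  have key := sqrt_add_strictMono _ hB
    (show δ * ε - c2 * lam / (r + δ) < δ * ε - c1 * lam / (r + δ) by
      have : c1 * lam / (r + δ) < c2 * lam / (r + δ) := by gcongr
      linarith)
  simp only at key
  unfold kstar
  exact (div_lt_div_iff_of_pos_right (by positivity)).mpr (by linarith)
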